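/- arXiv:1403.1703 — 5 statements merged into one kernel-verified Lean document; each statement's English description precedes it below -/
import Mathlib

section
/- Let h ∈ (0,1) and ρ ∈ [0, π/2]. If s > 0, 1 - s > 0, and the unit complex numbers η₁ = e^{iρ}, η₂ satisfy (1-h) + (1+h)·s·η₁² + (1+h)·(1-s)·η₂² = 0, then s = 2h / ((1+h)(1+h + (1-h)·cos(2ρ))). -/
open Real Complex

theorem stmt_0 (h ρ s : ℝ) (η₂ : ℂ)
    (hh0 : 0 < h) (hh1 : h < 1)
    (hρ0 : 0 ≤ ρ) (hρ1 : ρ ≤ Real.pi / 2)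
    (hs0 : 0 < s) (hs1 : 0 < 1 - s)
    (hη₂ : ‖η₂‖ = 1)
    (heq : ((1 - h : ℝ) : ℂ) + ((1 + h : ℝ) : ℂ) * (s : ℂ) * (Complex.exp (ρ * Complex.I)) ^ 2
      + ((1 + h : ℝ) : ℂ) * ((1 - s : ℝ) : ℂ) * η₂ ^ 2 = 0) :
    s = 2 * h / ((1 + h) * (1 + h + (1 - h) * Real.cos (2 * ρ))) := by
  have hexp : (Complex.exp (ρ * Complex.I)) ^ 2
      = ((Real.cos (2 * ρ) : ℝ) : ℂ) + ((Real.sin (2 * ρ) : ℝ) : ℂ) * Complex.I := by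
    rw [← Complex.exp_nat_mul]
    have : (2 : ℕ) * ((ρ : ℂ) * Complex.I) = ((2 * ρ : ℝ) : ℂ) * Complex.I := by
      push_cast; ring
    rw [this, Complex.exp_mul_I]
    push_cast
    simp [Complex.cos_ofReal_re, Complex.sin_ofReal_re]
  set A : ℂ := ((1 - h : ℝ) : ℂ) + ((1 + h : ℝ) : ℂ) * (s : ℂ) * (Complex.exp (ρ * Complex.I)) ^ 2
    with hA
  have hEq2 : ((1 + h : ℝ) : ℂ) * ((1 - s : ℝ) : ℂ) * η₂ ^ 2 = -A := by
    rw [hA]; linear_combination heq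
  have habs : (1 + h) * (1 - s) = ‖A‖ := by
    have := congrArg (‖·‖) hEq2
    rw [norm_mul, norm_mul, norm_pow, hη₂, Complex.norm_real, Complex.norm_real, Real.norm_eq_abs,
      Real.norm_eq_abs, norm_neg] at this
    rw [abs_of_pos (by linarith : (0:ℝ) < 1 + h), abs_of_pos hs1] at this
    simpa using this
  have hre : A.re = (1 - h) + (1 + h) * s * Real.cos (2 * ρ) := by
    rw [hA, hexp]
    simp only [Complex.add_re, Complex.mul_re, Complex.mul_im, Complex.ofReal_re,
      Complex.ofReal_im, Complex.I_re, Complex.I_im, Complex.add_im]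
    ring
  have him : A.im = (1 + h) * s * Real.sin (2 * ρ) := by
    rw [hA, hexp]
    simp only [Complex.add_re, Complex.mul_re, Complex.mul_im, Complex.ofReal_re,
      Complex.ofReal_im, Complex.I_re, Complex.I_im, Complex.add_im]
    ring
  have hsq : ((1 + h) * (1 - s))^2 = A.re^2 + A.im^2 := by
    rw [habs, Complex.sq_norm, Complex.normSq_apply]; ring
  rw [hre, him] at hsq
  have hpy : Real.sin (2 * ρ)^2 + Real.cos (2 * ρ)^2 = 1 := Real.sin_sq_add_cos_sq _
  have hkey : ((1+h)*(1-s))^2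
      = (1-h)^2 + 2*(1-h)*(1+h)*s*Real.cos (2*ρ) + ((1+h)*s)^2 := by
    nlinarith [hsq, hpy]
  have hden : 0 < 1 + h + (1 - h) * Real.cos (2 * ρ) := by
    nlinarith [Real.neg_one_le_cos (2*ρ)]
  have hden2 : (1 + h) * (1 + h + (1 - h) * Real.cos (2 * ρ)) ≠ 0 := by positivity
  field_simp
  nlinarith [hkey]
end

section
/- Let h ∈ (0,1), ρ ∈ (0, π/2), and set s = 2h/((1+h)(1+h+(1-h)cos 2ρ)). If η₂ = e^{iρ̃} with ρ̃ ∈ (-π/2, 0) is a unit complex number satisfying (1-h) + (1+h)s·e^{2iρ} + (1+h)(1-s)·η₂² = 0, then cos(2ρ̃) = (h² - 1 - (1+h²)cos 2ρ) / (1 + h² + (1-h²)cos 2ρ) and sin(2ρ̃) = -2h·sin(2ρ) / (1 + h² + (1-h²)cos 2ρ). -/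
open Real Complex

theorem stmt_2 (h ρ ρ' : ℝ)
    (hh0 : 0 < h) (hh1 : h < 1)
    (hρ : ρ ∈ Set.Ioo 0 (Real.pi / 2))
    (hρ' : ρ' ∈ Set.Ioo (-(Real.pi / 2)) 0)
    (s : ℝ) (hs : s = 2 * h / ((1 + h) * (1 + h + (1 - h) * Real.cos (2 * ρ))))
    (heq : ((1 - h : ℝ) : ℂ) + ((1 + h : ℝ) : ℂ) * (s : ℂ) * Complex.exp (2 * ρ * Complex.I)
      + ((1 + h : ℝ) : ℂ) * ((1 - s : ℝ) : ℂ) * (Complex.exp (ρ' * Complex.I)) ^ 2 = 0) :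
    Real.cos (2 * ρ') = (h ^ 2 - 1 - (1 + h ^ 2) * Real.cos (2 * ρ))
        / (1 + h ^ 2 + (1 - h ^ 2) * Real.cos (2 * ρ)) ∧
    Real.sin (2 * ρ') = -2 * h * Real.sin (2 * ρ)
        / (1 + h ^ 2 + (1 - h ^ 2) * Real.cos (2 * ρ)) := by
  obtain ⟨hρ1, hρ2⟩ := hρ
  have hsin : 0 < Real.sin (2 * ρ) :=
    Real.sin_pos_of_pos_of_lt_pi (by linarith) (by linarith)
  have hc : -1 < Real.cos (2 * ρ) := by
    nlinarith [Real.sin_sq_add_cos_sq (2 * ρ), Real.neg_one_le_cos (2 * ρ), sq_nonneg (Real.sin (2 * ρ))]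
  have hc1 : Real.cos (2 * ρ) ≤ 1 := Real.cos_le_one _
  have hE : 0 < 1 + h + (1 - h) * Real.cos (2 * ρ) := by nlinarith
  have hF : 0 < 1 + h ^ 2 + (1 - h ^ 2) * Real.cos (2 * ρ) := by nlinarith
  have e1 : Complex.exp (2 * ρ * Complex.I) =
      (Real.cos (2 * ρ) : ℂ) + (Real.sin (2 * ρ) : ℂ) * Complex.I := by
    have : (2 * ρ * Complex.I : ℂ) = ((2 * ρ : ℝ) : ℂ) * Complex.I := by push_cast; ring
    rw [this, Complex.exp_mul_I, ← Complex.ofReal_cos, ← Complex.ofReal_sin]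
  have e2 : Complex.exp (ρ' * Complex.I) ^ 2 =
      (Real.cos (2 * ρ') : ℂ) + (Real.sin (2 * ρ') : ℂ) * Complex.I := by
    rw [← Complex.exp_nat_mul]
    have : ((2 : ℕ) : ℂ) * ((ρ' : ℂ) * Complex.I) = ((2 * ρ' : ℝ) : ℂ) * Complex.I := by
      push_cast; ring
    rw [this, Complex.exp_mul_I, ← Complex.ofReal_cos, ← Complex.ofReal_sin]
  rw [e1, e2] at heq
  have hre := congrArg Complex.re heq
  have him := congrArg Complex.im heq
  simp only [Complex.add_re, Complex.add_im, Complex.mul_re, Complex.mul_im,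
    Complex.ofReal_re, Complex.ofReal_im, Complex.I_re, Complex.I_im,
    Complex.zero_re, Complex.zero_im, mul_zero, zero_mul, mul_one, sub_zero,
    add_zero, zero_add, zero_sub, mul_neg, neg_zero] at hre him
  have hre' : (1 - h) + (1 + h) * s * Real.cos (2 * ρ)
      + (1 + h) * (1 - s) * Real.cos (2 * ρ') = 0 := by linarith [hre]
  have him' : (1 + h) * s * Real.sin (2 * ρ)
      + (1 + h) * (1 - s) * Real.sin (2 * ρ') = 0 := by linarith [him]
  have hs' : (1 + h) * (1 - s) * (1 + h + (1 - h) * Real.cos (2 * ρ))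
      = 1 + h ^ 2 + (1 - h ^ 2) * Real.cos (2 * ρ) := by
    rw [hs]; field_simp; ring
  have hss : (1 + h) * s * (1 + h + (1 - h) * Real.cos (2 * ρ)) = 2 * h := by
    rw [hs]; field_simp
  constructor
  · rw [eq_div_iff hF.ne']
    linear_combination (1 + h + (1 - h) * Real.cos (2 * ρ)) * hre'
      - Real.cos (2 * ρ') * hs' - Real.cos (2 * ρ) * hss
  · rw [eq_div_iff hF.ne']
    linear_combination (1 + h + (1 - h) * Real.cos (2 * ρ)) * him'
      - Real.sin (2 * ρ') * hs' - Real.sin (2 * ρ) * hss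
end

section
/- Let a, b > 0 with (a-b)² < 1, set h = (1-(a-b)²)/(1+(a-b)²+2(a+b)) and s = (1+a-b)/2. Then h/(1+h) < s < 1/(1+h). -/
theorem stmt_9 (a b : ℝ) (ha : 0 < a) (hb : 0 < b)
    (hab : (a - b) ^ 2 < 1)
    (h s : ℝ)
    (hdef : h = (1 - (a - b) ^ 2) / (1 + (a - b) ^ 2 + 2 * (a + b)))
    (sdef : s = (1 + a - b) / 2) :
    h / (1 + h) < s ∧ s < 1 / (1 + h) := by
  have hD : (0:ℝ) < 1 + (a - b) ^ 2 + 2 * (a + b) := by positivity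
  have hE : (0:ℝ) < 2 * (1 + a + b) := by linarith
  have h1 : a - b < 1 := by nlinarith [sq_nonneg (a - b - 1)]
  have h2 : -1 < a - b := by nlinarith [sq_nonneg (a - b + 1)]
  have hh : 0 < h := by rw [hdef]; exact div_pos (by nlinarith) hD
  have h1h : (0:ℝ) < 1 + h := by linarith
  have hheq : 1 + h = 2 * (1 + a + b) / (1 + (a - b) ^ 2 + 2 * (a + b)) := by
    rw [hdef]; field_simp; ring
  have e1 : h / (1 + h) = (1 - (a - b) ^ 2) / (2 * (1 + a + b)) := by
    rw [hheq, hdef, div_div_div_eq]; rw [mul_comm ((1:ℝ) + (a-b)^2 + 2*(a+b)), mul_div_mul_right _ _ hD.ne', mul_comm]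
  have e2 : 1 / (1 + h) = (1 + (a - b) ^ 2 + 2 * (a + b)) / (2 * (1 + a + b)) := by
    rw [hheq, one_div, inv_div]
  constructor
  · rw [e1, sdef, div_lt_div_iff₀ hE (by norm_num)]
    nlinarith [mul_pos ha (show (0:ℝ) < 1 + a - b by linarith)]
  · rw [e2, sdef, div_lt_div_iff₀ (by norm_num : (0:ℝ) < 2) hE]
    nlinarith [mul_pos hb (show (0:ℝ) < 1 - a + b by linarith)]
end

section
/- Let h ∈ (0,1), λ₁ = 2(1-h), λ₂ = 2(1+h), and fix integers K₀, K₁ with K₁ - √(λ₂/λ₁)·K₀ ≠ 0. Define F(ρ) = (sin ρ̃ / sin ρ)·(K₁ - √(λ₂/λ₁) K₀ cos ρ) + √(λ₂/λ₁) K₀ cos ρ̃, where ρ̃ = arctan(-1/(h tan ρ)) for ρ ∈ (0, π/2). Then F is continuous on (0, π/2), lim_{ρ→0⁺} F(ρ) = -∞·sgn(K₁ - √(λ₂/λ₁) K₀), and lim_{ρ→π/2⁻} F(ρ) = √(λ₂/λ₁) K₀; consequently there exist infinitely many ρ ∈ (0, π/2) with F(ρ) ∈ ℤ. -/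
open Real Filter Set

lemma stmt12_aux_infinite {F : ℝ → ℝ} {S : Set ℝ} (e : ℕ → ℤ)
    (he : Function.Injective e)
    (hex : ∀ n : ℕ, ∃ ρ ∈ S, F ρ = (e n : ℝ)) :
    { ρ ∈ S | ∃ k : ℤ, F ρ = (k : ℝ) }.Infinite := by
  choose ρ hρS hρF using hex
  refine Set.infinite_of_injective_forall_mem (f := ρ) ?_ ?_
  · intro m n hmn
    apply he
    have : (e m : ℝ) = (e n : ℝ) := by rw [← hρF m, ← hρF n, hmn]
    exact_mod_cast this
  · exact fun n => ⟨hρS n, ⟨e n, hρF n⟩⟩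

theorem stmt_12 (h : ℝ) (hh0 : 0 < h) (hh1 : h < 1)
    (K₀ K₁ : ℤ)
    (c : ℝ) (hc : c = Real.sqrt ((2 * (1 + h)) / (2 * (1 - h))))
    (hK : (K₁ : ℝ) - c * (K₀ : ℝ) ≠ 0)
    (F : ℝ → ℝ)
    (hF : ∀ ρ : ℝ, F ρ =
      (Real.sin (Real.arctan (-1 / (h * Real.tan ρ))) / Real.sin ρ) *
        ((K₁ : ℝ) - c * (K₀ : ℝ) * Real.cos ρ) +
      c * (K₀ : ℝ) * Real.cos (Real.arctan (-1 / (h * Real.tan ρ)))) :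
    ContinuousOn F (Set.Ioo 0 (Real.pi / 2)) ∧
    Filter.Tendsto F (nhdsWithin 0 (Set.Ioi 0))
      (if 0 < (K₁ : ℝ) - c * (K₀ : ℝ) then Filter.atBot else Filter.atTop) ∧
    Filter.Tendsto F (nhdsWithin (Real.pi / 2) (Set.Iio (Real.pi / 2)))
      (nhds (c * (K₀ : ℝ))) ∧
    { ρ ∈ Set.Ioo 0 (Real.pi / 2) | ∃ k : ℤ, F ρ = (k : ℝ) }.Infinite := by
  have hpi : (0:ℝ) < Real.pi := Real.pi_pos
  have hpi2 : (0:ℝ) < Real.pi / 2 := by linarith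
  set A : ℝ := (K₁ : ℝ) - c * (K₀ : ℝ) with hA
  have hFeq : F = fun ρ => (Real.sin (Real.arctan (-1 / (h * Real.tan ρ))) / Real.sin ρ) *
        ((K₁ : ℝ) - c * (K₀ : ℝ) * Real.cos ρ) +
      c * (K₀ : ℝ) * Real.cos (Real.arctan (-1 / (h * Real.tan ρ))) := funext hF
  -- basic positivity facts
  have hsin_pos : ∀ ρ ∈ Set.Ioo (0:ℝ) (Real.pi/2), 0 < Real.sin ρ := fun ρ hρ =>
    Real.sin_pos_of_pos_of_lt_pi hρ.1 (by linarith [hρ.2])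
  have hcos_pos : ∀ ρ ∈ Set.Ioo (0:ℝ) (Real.pi/2), 0 < Real.cos ρ := fun ρ hρ =>
    Real.cos_pos_of_mem_Ioo ⟨by linarith [hρ.1], hρ.2⟩
  have htan_pos : ∀ ρ ∈ Set.Ioo (0:ℝ) (Real.pi/2), 0 < Real.tan ρ := fun ρ hρ =>
    Real.tan_pos_of_pos_of_lt_pi_div_two hρ.1 hρ.2
  -- continuity
  have hconT : ContinuousOn Real.tan (Set.Ioo 0 (Real.pi/2)) :=
    Real.continuousOn_tan.mono (fun ρ hρ => (hcos_pos ρ hρ).ne')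
  have hconInner : ContinuousOn (fun ρ => -1 / (h * Real.tan ρ)) (Set.Ioo 0 (Real.pi/2)) :=
    ContinuousOn.div continuousOn_const (continuousOn_const.mul hconT)
      (fun ρ hρ => by have := htan_pos ρ hρ; positivity)
  have hcong : ContinuousOn (fun ρ => Real.arctan (-1 / (h * Real.tan ρ))) (Set.Ioo 0 (Real.pi/2)) :=
    Real.continuous_arctan.comp_continuousOn hconInner
  have hcont : ContinuousOn F (Set.Ioo 0 (Real.pi/2)) := by
    rw [hFeq]
    apply ContinuousOn.add
    · exact ((Real.continuous_sin.comp_continuousOn hcong).div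
        Real.continuous_sin.continuousOn (fun ρ hρ => (hsin_pos ρ hρ).ne')).mul
        (continuousOn_const.sub (continuousOn_const.mul Real.continuous_cos.continuousOn))
    · exact continuousOn_const.mul (Real.continuous_cos.comp_continuousOn hcong)
  -- the inner function tendsto atBot as ρ → 0⁺
  have htan0 : Tendsto Real.tan (nhdsWithin 0 (Set.Ioi 0)) (nhdsWithin 0 (Set.Ioi 0)) := by
    apply tendsto_nhdsWithin_of_tendsto_nhds_of_eventually_within
    · have hcont0 : ContinuousAt Real.tan 0 := Real.continuousAt_tan.2 (by simp)
      simpa using hcont0.continuousWithinAt.tendsto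
    · filter_upwards [Ioo_mem_nhdsGT_of_mem (by exact ⟨le_refl (0:ℝ), hpi2⟩)] with ρ hρ
      exact htan_pos ρ hρ
  have hinner0 : Tendsto (fun ρ => -1 / (h * Real.tan ρ)) (nhdsWithin 0 (Set.Ioi 0)) atBot := by
    have h1 : Tendsto (fun ρ => (Real.tan ρ)⁻¹) (nhdsWithin 0 (Set.Ioi 0)) atTop :=
      tendsto_inv_nhdsGT_zero.comp htan0
    have h2 : Tendsto (fun ρ => (-1/h) * (Real.tan ρ)⁻¹) (nhdsWithin 0 (Set.Ioi 0)) atBot :=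
      Filter.Tendsto.const_mul_atTop_of_neg (div_neg_of_neg_of_pos (by norm_num) hh0) h1
    apply h2.congr
    intro ρ
    rw [div_eq_mul_inv, div_eq_mul_inv, mul_inv]
    ring
  have harctan0 : Tendsto (fun ρ => Real.arctan (-1 / (h * Real.tan ρ)))
      (nhdsWithin 0 (Set.Ioi 0)) (nhds (-(Real.pi/2))) :=
    (Real.tendsto_arctan_atBot.mono_right nhdsWithin_le_nhds).comp hinner0
  have hsing0 : Tendsto (fun ρ => Real.sin (Real.arctan (-1 / (h * Real.tan ρ))))
      (nhdsWithin 0 (Set.Ioi 0)) (nhds (-1)) := by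
    have := (Real.continuous_sin.tendsto (-(Real.pi/2))).comp harctan0
    simpa [Function.comp_def] using this
  have hcosg0 : Tendsto (fun ρ => Real.cos (Real.arctan (-1 / (h * Real.tan ρ))))
      (nhdsWithin 0 (Set.Ioi 0)) (nhds 0) := by
    have := (Real.continuous_cos.tendsto (-(Real.pi/2))).comp harctan0
    simpa [Function.comp_def] using this
  have hsin0 : Tendsto Real.sin (nhdsWithin 0 (Set.Ioi 0)) (nhdsWithin 0 (Set.Ioi 0)) := by
    apply tendsto_nhdsWithin_of_tendsto_nhds_of_eventually_within
    · simpa using (Real.continuous_sin.tendsto 0).mono_left nhdsWithin_le_nhds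
    · filter_upwards [Ioo_mem_nhdsGT_of_mem (by exact ⟨le_refl (0:ℝ), hpi2⟩)] with ρ hρ
      exact hsin_pos ρ hρ
  have hsininv0 : Tendsto (fun ρ => (Real.sin ρ)⁻¹) (nhdsWithin 0 (Set.Ioi 0)) atTop :=
    tendsto_inv_nhdsGT_zero.comp hsin0
  have hcos0 : Tendsto (fun ρ : ℝ => Real.cos ρ) (nhdsWithin 0 (Set.Ioi 0)) (nhds 1) := by
    simpa using (Real.continuous_cos.tendsto 0).mono_left nhdsWithin_le_nhds
  have hbracket0 : Tendsto (fun ρ => (K₁ : ℝ) - c * (K₀ : ℝ) * Real.cos ρ)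
      (nhdsWithin 0 (Set.Ioi 0)) (nhds A) := by
    have : Tendsto (fun ρ => (K₁ : ℝ) - c * (K₀ : ℝ) * Real.cos ρ)
        (nhdsWithin 0 (Set.Ioi 0)) (nhds ((K₁:ℝ) - c * (K₀:ℝ) * 1)) :=
      tendsto_const_nhds.sub (tendsto_const_nhds.mul hcos0)
    simpa [hA] using this
  have hprod0 : Tendsto (fun ρ => Real.sin (Real.arctan (-1 / (h * Real.tan ρ))) *
      ((K₁ : ℝ) - c * (K₀ : ℝ) * Real.cos ρ)) (nhdsWithin 0 (Set.Ioi 0)) (nhds (-A)) := by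
    have := hsing0.mul hbracket0
    simpa using this
  have key0 : ∀ ρ : ℝ, F ρ = (Real.sin (Real.arctan (-1 / (h * Real.tan ρ))) *
      ((K₁ : ℝ) - c * (K₀ : ℝ) * Real.cos ρ)) * (Real.sin ρ)⁻¹ +
      c * (K₀ : ℝ) * Real.cos (Real.arctan (-1 / (h * Real.tan ρ))) := by
    intro ρ
    rw [hF ρ, div_eq_mul_inv]
    ring
  have hcos_term0 : Tendsto (fun ρ => c * (K₀ : ℝ) * Real.cos (Real.arctan (-1 / (h * Real.tan ρ))))
      (nhdsWithin 0 (Set.Ioi 0)) (nhds 0) := by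
    have := tendsto_const_nhds.mul hcosg0 (f := fun _ : ℝ => c * (K₀ : ℝ))
    simpa using this
  have hlim0 : Tendsto F (nhdsWithin 0 (Set.Ioi 0))
      (if 0 < A then Filter.atBot else Filter.atTop) := by
    by_cases hApos : 0 < A
    · rw [if_pos hApos]
      have hmul : Tendsto (fun ρ => (Real.sin (Real.arctan (-1 / (h * Real.tan ρ))) *
          ((K₁ : ℝ) - c * (K₀ : ℝ) * Real.cos ρ)) * (Real.sin ρ)⁻¹)
          (nhdsWithin 0 (Set.Ioi 0)) atBot :=
        Filter.Tendsto.neg_mul_atTop (by linarith) hprod0 hsininv0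
      have := hmul.atBot_add hcos_term0
      exact this.congr (fun ρ => (key0 ρ).symm)
    · rw [if_neg hApos]
      have hAneg : A < 0 := lt_of_le_of_ne (not_lt.1 hApos) hK
      have hmul : Tendsto (fun ρ => (Real.sin (Real.arctan (-1 / (h * Real.tan ρ))) *
          ((K₁ : ℝ) - c * (K₀ : ℝ) * Real.cos ρ)) * (Real.sin ρ)⁻¹)
          (nhdsWithin 0 (Set.Ioi 0)) atTop :=
        Filter.Tendsto.pos_mul_atTop (by linarith) hprod0 hsininv0
      have := hmul.atTop_add hcos_term0
      exact this.congr (fun ρ => (key0 ρ).symm)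
  -- limit at π/2
  have htanpi : Tendsto (fun ρ => h * Real.tan ρ)
      (nhdsWithin (Real.pi/2) (Set.Iio (Real.pi/2))) atTop :=
    Filter.Tendsto.const_mul_atTop hh0 Real.tendsto_tan_pi_div_two
  have hinnerpi : Tendsto (fun ρ => -1 / (h * Real.tan ρ))
      (nhdsWithin (Real.pi/2) (Set.Iio (Real.pi/2))) (nhds 0) := by
    have h1 : Tendsto (fun ρ => (h * Real.tan ρ)⁻¹)
        (nhdsWithin (Real.pi/2) (Set.Iio (Real.pi/2))) (nhds 0) :=
      tendsto_inv_atTop_zero.comp htanpi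
    have := h1.neg
    simp only [neg_zero] at this
    apply this.congr
    intro ρ
    simp [neg_div]
  have harctanpi : Tendsto (fun ρ => Real.arctan (-1 / (h * Real.tan ρ)))
      (nhdsWithin (Real.pi/2) (Set.Iio (Real.pi/2))) (nhds 0) := by
    have := (Real.continuous_arctan.tendsto 0).comp hinnerpi
    simpa [Function.comp_def] using this
  have hsingpi : Tendsto (fun ρ => Real.sin (Real.arctan (-1 / (h * Real.tan ρ))))
      (nhdsWithin (Real.pi/2) (Set.Iio (Real.pi/2))) (nhds 0) := by
    have := (Real.continuous_sin.tendsto 0).comp harctanpi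
    simpa [Function.comp_def] using this
  have hcosgpi : Tendsto (fun ρ => Real.cos (Real.arctan (-1 / (h * Real.tan ρ))))
      (nhdsWithin (Real.pi/2) (Set.Iio (Real.pi/2))) (nhds 1) := by
    have := (Real.continuous_cos.tendsto 0).comp harctanpi
    simpa [Function.comp_def] using this
  have hsinpi : Tendsto Real.sin (nhdsWithin (Real.pi/2) (Set.Iio (Real.pi/2))) (nhds 1) := by
    have := (Real.continuous_sin.tendsto (Real.pi/2)).mono_left
      (nhdsWithin_le_nhds (s := Set.Iio (Real.pi/2)))
    simpa using this
  have hcospi : Tendsto Real.cos (nhdsWithin (Real.pi/2) (Set.Iio (Real.pi/2))) (nhds 0) := by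
    have := (Real.continuous_cos.tendsto (Real.pi/2)).mono_left
      (nhdsWithin_le_nhds (s := Set.Iio (Real.pi/2)))
    simpa using this
  have hlimpi : Tendsto F (nhdsWithin (Real.pi/2) (Set.Iio (Real.pi/2)))
      (nhds (c * (K₀ : ℝ))) := by
    rw [hFeq]
    have : Tendsto (fun ρ => (Real.sin (Real.arctan (-1 / (h * Real.tan ρ))) / Real.sin ρ) *
        ((K₁ : ℝ) - c * (K₀ : ℝ) * Real.cos ρ) +
        c * (K₀ : ℝ) * Real.cos (Real.arctan (-1 / (h * Real.tan ρ))))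
        (nhdsWithin (Real.pi/2) (Set.Iio (Real.pi/2)))
        (nhds ((0/1) * ((K₁:ℝ) - c * (K₀:ℝ) * 0) + c * (K₀:ℝ) * 1)) := by
      exact ((hsingpi.div hsinpi one_ne_zero).mul
        (tendsto_const_nhds.sub (tendsto_const_nhds.mul hcospi))).add
        (tendsto_const_nhds.mul hcosgpi)
    simpa using this
  refine ⟨hcont, hlim0, hlimpi, ?_⟩
  -- infinitude of integer values
  by_cases hApos : 0 < A
  · -- F → atBot at 0⁺
    rw [if_pos hApos] at hlim0
    -- choose b near π/2 with F b > c K₀ - 1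
    have hev : ∀ᶠ ρ in nhdsWithin (Real.pi/2) (Set.Iio (Real.pi/2)),
        c * (K₀:ℝ) - 1 < F ρ ∧ ρ ∈ Set.Ioo 0 (Real.pi/2) := by
      filter_upwards [hlimpi.eventually (eventually_gt_nhds (by linarith : c * (K₀:ℝ) - 1 < c * (K₀:ℝ))),
        Ioo_mem_nhdsLT_of_mem (⟨hpi2, le_refl (Real.pi/2)⟩)] with ρ h1 h2
      exact ⟨h1, h2⟩
    obtain ⟨b, hFb, hbmem⟩ := hev.exists
    apply stmt12_aux_infinite (e := fun n => ⌊c * (K₀:ℝ)⌋ - 1 - n)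
    · intro m n hmn
      simpa using hmn
    · intro n
      set k : ℤ := ⌊c * (K₀:ℝ)⌋ - 1 - n with hk
      have hkle : (k : ℝ) ≤ c * (K₀:ℝ) - 1 := by
        have h1 : (⌊c * (K₀:ℝ)⌋ : ℝ) ≤ c * (K₀:ℝ) := Int.floor_le _
        have h2 : (k : ℝ) = (⌊c * (K₀:ℝ)⌋ : ℝ) - 1 - n := by push_cast [hk]; ring
        have h3 : (0:ℝ) ≤ n := Nat.cast_nonneg n
        linarith
      have hkltFb : (k : ℝ) < F b := by linarith
      -- choose a near 0 with F a < k
      have heva : ∀ᶠ ρ in nhdsWithin (0:ℝ) (Set.Ioi 0),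
          F ρ < (k:ℝ) ∧ ρ ∈ Set.Ioo 0 b := by
        filter_upwards [hlim0.eventually (eventually_lt_atBot ((k:ℝ))),
          Ioo_mem_nhdsGT_of_mem (⟨le_refl (0:ℝ), hbmem.1⟩)] with ρ h1 h2
        exact ⟨h1, h2⟩
      obtain ⟨a, hFa, hamem⟩ := heva.exists
      have hab : a ≤ b := le_of_lt hamem.2
      have hsub : Set.Icc a b ⊆ Set.Ioo 0 (Real.pi/2) := fun x hx =>
        ⟨lt_of_lt_of_le hamem.1 hx.1, lt_of_le_of_lt hx.2 hbmem.2⟩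
      have hivt := intermediate_value_Icc hab (hcont.mono hsub)
      have hkmem : (k:ℝ) ∈ Set.Icc (F a) (F b) := ⟨le_of_lt hFa, le_of_lt hkltFb⟩
      obtain ⟨ρ, hρmem, hρF⟩ := hivt hkmem
      exact ⟨ρ, hsub hρmem, hρF⟩
  · -- F → atTop at 0⁺
    rw [if_neg hApos] at hlim0
    have hev : ∀ᶠ ρ in nhdsWithin (Real.pi/2) (Set.Iio (Real.pi/2)),
        F ρ < c * (K₀:ℝ) + 1 ∧ ρ ∈ Set.Ioo 0 (Real.pi/2) := by
      filter_upwards [hlimpi.eventually (eventually_lt_nhds (by linarith : c * (K₀:ℝ) < c * (K₀:ℝ) + 1)),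
        Ioo_mem_nhdsLT_of_mem (⟨hpi2, le_refl (Real.pi/2)⟩)] with ρ h1 h2
      exact ⟨h1, h2⟩
    obtain ⟨b, hFb, hbmem⟩ := hev.exists
    apply stmt12_aux_infinite (e := fun n => ⌈c * (K₀:ℝ)⌉ + 1 + n)
    · intro m n hmn
      simpa using hmn
    · intro n
      set k : ℤ := ⌈c * (K₀:ℝ)⌉ + 1 + n with hk
      have hkge : c * (K₀:ℝ) + 1 ≤ (k : ℝ) := by
        have h1 : c * (K₀:ℝ) ≤ (⌈c * (K₀:ℝ)⌉ : ℝ) := Int.le_ceil _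
        have h2 : (k : ℝ) = (⌈c * (K₀:ℝ)⌉ : ℝ) + 1 + n := by push_cast [hk]; ring
        have h3 : (0:ℝ) ≤ n := Nat.cast_nonneg n
        linarith
      have hkgtFb : F b < (k : ℝ) := by linarith
      have heva : ∀ᶠ ρ in nhdsWithin (0:ℝ) (Set.Ioi 0),
          (k:ℝ) < F ρ ∧ ρ ∈ Set.Ioo 0 b := by
        filter_upwards [hlim0.eventually (eventually_gt_atTop ((k:ℝ))),
          Ioo_mem_nhdsGT_of_mem (⟨le_refl (0:ℝ), hbmem.1⟩)] with ρ h1 h2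
        exact ⟨h1, h2⟩
      obtain ⟨a, hFa, hamem⟩ := heva.exists
      have hab : a ≤ b := le_of_lt hamem.2
      have hsub : Set.Icc a b ⊆ Set.Ioo 0 (Real.pi/2) := fun x hx =>
        ⟨lt_of_lt_of_le hamem.1 hx.1, lt_of_le_of_lt hx.2 hbmem.2⟩
      have hivt := intermediate_value_Icc' hab (hcont.mono hsub)
      have hkmem : (k:ℝ) ∈ Set.Icc (F b) (F a) := ⟨le_of_lt hkgtFb, le_of_lt hFa⟩
      obtain ⟨ρ, hρmem, hρF⟩ := hivt hkmem
      exact ⟨ρ, hsub hρmem, hρF⟩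
end

section
/- Let a, b > 0 with (a-b)² < 1, set h = (1-(a-b)²)/(1+(a-b)²+2(a+b)) and s = (1+a-b)/2. Then sin²ρ = a(1+(a-b)²+2(a+b)) / ((1+a+b)((a-b)²+a+b)) and cos²ρ = b(1-a+b)² / ((1+a+b)((a-b)²+a+b)), where ρ ∈ (0, π/2) is determined by tan(ρ/2) = (√(s(1-h²)) - √(h(1-s-hs)))/√(s-(1-s)h). -/
open Real

theorem stmt_13 (a b : ℝ) (ha : 0 < a) (hb : 0 < b) (hab : (a - b) ^ 2 < 1)
    (h s ρ : ℝ)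
    (hdef : h = (1 - (a - b) ^ 2) / (1 + (a - b) ^ 2 + 2 * (a + b)))
    (sdef : s = (1 + a - b) / 2)
    (hρ : ρ ∈ Set.Ioo 0 (Real.pi / 2))
    (htan : Real.tan (ρ / 2) =
      (Real.sqrt (s * (1 - h ^ 2)) - Real.sqrt (h * (1 - s - h * s)))
        / Real.sqrt (s - (1 - s) * h)) :
    Real.sin ρ ^ 2 = a * (1 + (a - b) ^ 2 + 2 * (a + b))
        / ((1 + a + b) * ((a - b) ^ 2 + a + b)) ∧
    Real.cos ρ ^ 2 = b * (1 - a + b) ^ 2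
        / ((1 + a + b) * ((a - b) ^ 2 + a + b)) := by
  subst hdef sdef
  obtain ⟨hρ0, hρπ⟩ := hρ
  have hd1 : 0 < 1 + a - b := by nlinarith [sq_nonneg (a - b + 1)]
  have hd2 : 0 < 1 - a + b := by nlinarith [sq_nonneg (a - b - 1)]
  set E : ℝ := 1 + (a - b) ^ 2 + 2 * (a + b) with hE
  have hEpos : 0 < E := by positivity
  set K : ℝ := (1 + a + b) * ((a - b) ^ 2 + a + b) with hK
  have hKpos : 0 < K := by positivity
  set c : ℝ := Real.sqrt (2 * (1 + a - b)) with hc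
  set w : ℝ := Real.sqrt K with hw
  set v : ℝ := (1 - a + b) * Real.sqrt b with hv
  set u : ℝ := Real.sqrt a * Real.sqrt E with hu
  have hcpos : 0 < c := Real.sqrt_pos.mpr (by linarith)
  have hc2 : c ^ 2 = 2 * (1 + a - b) := Real.sq_sqrt (by linarith)
  have hw2 : w ^ 2 = K := Real.sq_sqrt hKpos.le
  have hwpos : 0 < w := Real.sqrt_pos.mpr hKpos
  have hvpos : 0 < v := by positivity
  have hupos : 0 < u := by positivity
  have hsqa : (0:ℝ) < Real.sqrt a := Real.sqrt_pos.mpr ha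
  have hsqb : (0:ℝ) ≤ Real.sqrt b := Real.sqrt_nonneg b
  have hsqE : (0:ℝ) < Real.sqrt E := Real.sqrt_pos.mpr hEpos
  have hsqE2 : Real.sqrt E ^ 2 = E := Real.sq_sqrt hEpos.le
  have hsqa2 : Real.sqrt a ^ 2 = a := Real.sq_sqrt ha.le
  have hsqb2 : Real.sqrt b ^ 2 = b := Real.sq_sqrt hb.le
  have hu2 : u ^ 2 = a * E := by rw [hu, mul_pow, hsqa2, hsqE2]
  have hv2 : v ^ 2 = b * (1 - a + b) ^ 2 := by rw [hv, mul_pow, hsqb2]; ring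
  have hpyth : w ^ 2 = u ^ 2 + v ^ 2 := by rw [hw2, hu2, hv2, hK, hE]; ring
  -- simplify the three square roots
  have hA : Real.sqrt ((1 + a - b) / 2 * (1 - ((1 - (a - b) ^ 2) / E) ^ 2))
      = c * w / E := by
    have he : (1 + a - b) / 2 * (1 - ((1 - (a - b) ^ 2) / E) ^ 2) = (c * w / E) ^ 2 := by
      have hr : (c * w / E) ^ 2 = 2 * (1 + a - b) * K / E ^ 2 := by
        rw [div_pow, mul_pow, hc2, hw2]
      rw [hr, hK, hE]
      field_simp
      ring
    rw [he, Real.sqrt_sq (by positivity)]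
  have hB : Real.sqrt ((1 - (a - b) ^ 2) / E *
      (1 - (1 + a - b) / 2 - (1 - (a - b) ^ 2) / E * ((1 + a - b) / 2)))
      = c * Real.sqrt b * (1 - a + b) / E := by
    have he : (1 - (a - b) ^ 2) / E *
        (1 - (1 + a - b) / 2 - (1 - (a - b) ^ 2) / E * ((1 + a - b) / 2))
        = (c * Real.sqrt b * (1 - a + b) / E) ^ 2 := by
      have hr : (c * Real.sqrt b * (1 - a + b) / E) ^ 2
          = 2 * (1 + a - b) * b * (1 - a + b) ^ 2 / E ^ 2 := by
        rw [div_pow, mul_pow, mul_pow, hc2, hsqb2]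
      rw [hr, hE]
      field_simp
      ring
    rw [he, Real.sqrt_sq (by positivity)]
  have hC : Real.sqrt ((1 + a - b) / 2 - (1 - (1 + a - b) / 2) * ((1 - (a - b) ^ 2) / E))
      = c * Real.sqrt a / Real.sqrt E := by
    have he : (1 + a - b) / 2 - (1 - (1 + a - b) / 2) * ((1 - (a - b) ^ 2) / E)
        = (c * Real.sqrt a / Real.sqrt E) ^ 2 := by
      have hr : (c * Real.sqrt a / Real.sqrt E) ^ 2 = 2 * (1 + a - b) * a / E := by
        rw [div_pow, mul_pow, hc2, hsqa2, hsqE2]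
      rw [hr, hE]
      field_simp
      ring
    rw [he, Real.sqrt_sq (by positivity)]
  rw [hA, hB, hC] at htan
  clear_value E K c w v u
  set t : ℝ := Real.tan (ρ / 2) with ht
  clear_value t
  have step1 : c * w / E - c * Real.sqrt b * (1 - a + b) / E = c * (w - v) / E := by
    rw [hv]; ring
  have htval : t = (w - v) / u := by
    rw [htan, step1, hu]
    field_simp
    linear_combination (w - v) * hsqE2
  -- trig
  have hcoshalf : 0 < Real.cos (ρ / 2) := by
    apply Real.cos_pos_of_mem_Ioo
    constructor
    · linarith [Real.pi_pos]
    · linarith [Real.pi_pos]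
  set c2 : ℝ := Real.cos (ρ / 2) with hc2def
  clear_value c2
  have hne : Real.cos (ρ / 2) ≠ 0 := by rw [← hc2def]; exact hcoshalf.ne'
  have hsinhalf : Real.sin (ρ / 2) = t * c2 := by
    rw [ht, hc2def, Real.tan_eq_sin_div_cos, div_mul_cancel₀ _ hne]
  have hone : c2 ^ 2 * (1 + t ^ 2) = 1 := by
    have hp := Real.sin_sq_add_cos_sq (ρ / 2)
    rw [hsinhalf, ← hc2def] at hp
    linear_combination hp
  have h2ρ : 2 * (ρ / 2) = ρ := by ring
  have hsinρ : Real.sin ρ = 2 * t * c2 ^ 2 := by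
    rw [← h2ρ, Real.sin_two_mul, hsinhalf, ← hc2def]
    ring
  have hcosρ : Real.cos ρ = (1 - t ^ 2) * c2 ^ 2 := by
    rw [← h2ρ, Real.cos_two_mul, ← hc2def]
    linear_combination hone
  have hsqlt : v ^ 2 < w ^ 2 := by have := pow_pos hupos 2; linarith
  have hwvpos : 0 < w - v :=
    sub_pos.mpr (lt_of_pow_lt_pow_left₀ 2 hwpos.le hsqlt)
  have hune : u ≠ 0 := hupos.ne'
  have hwne : w ≠ 0 := hwpos.ne'
  have hwvne : w - v ≠ 0 := hwvpos.ne'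
  have h1' : (1 + t ^ 2) * u ^ 2 = 2 * w * (w - v) := by
    rw [htval]
    field_simp
    linear_combination -hpyth
  have hc2val : c2 ^ 2 = u ^ 2 / (2 * w * (w - v)) := by
    rw [eq_div_iff (by positivity)]
    linear_combination (-(c2 ^ 2)) * h1' + u ^ 2 * hone
  have hsin : Real.sin ρ = u / w := by
    rw [hsinρ, htval, hc2val]
    field_simp
  have hnum : 1 - ((w - v) / u) ^ 2 = 2 * v * (w - v) / u ^ 2 := by
    field_simp
    linear_combination -hpyth
  have hcos : Real.cos ρ = v / w := by
    rw [hcosρ, htval, hc2val, hnum]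
    field_simp
  constructor
  · rw [hsin, div_pow, hu2, hw2]
  · rw [hcos, div_pow, hv2, hw2]
end
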